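/- Let Y > 0, let 𝓘 be a subinterval of (Y, 2Y], let J be a positive integer, and let (z_n) be complex numbers indexed by the integers n ∈ 𝓘. Then |Σ_{n ∈ 𝓘} z_n|² ≤ (1 + Y/J) · Σ_{|j| ≤ J} (1 − |j|/J) Σ_{n : n ∈ 𝓘 and n+j ∈ 𝓘} z_{n+j} · conj(z_n), where j and n run over integers (the right-hand side is automatically a nonnegative real number). -/

import Mathlib

open scoped Classical

theorem weyl_van_der_corput (Y : ℝ) (hY : 0 < Y) (c d : ℝ)
    (hsub : Set.Ioc c d ⊆ Set.Ioc Y (2 * Y)) (J : ℕ) (hJ : 0 < J) (z : ℤ → ℂ) :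
    ‖∑ n ∈ Finset.Ioc ⌊c⌋ ⌊d⌋, z n‖ ^ 2 ≤
      (1 + Y / (J : ℝ)) *
        (∑ j ∈ Finset.Icc (-(J : ℤ)) (J : ℤ),
          ((1 - |(j : ℝ)| / (J : ℝ) : ℝ) : ℂ) *
            ∑ n ∈ (Finset.Ioc ⌊c⌋ ⌊d⌋).filter (fun n => ((n + j : ℤ) : ℝ) ∈ Set.Ioc c d),
              z (n + j) * (starRingEnd ℂ) (z n)).re := by
  have hJpos : (0:ℝ) < (J:ℝ) := by exact_mod_cast hJ
  set I : Finset ℤ := Finset.Ioc ⌊c⌋ ⌊d⌋ with hI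
  set w : ℤ → ℂ := fun n => if n ∈ I then z n else 0 with hw
  set K : Finset ℤ := Finset.Icc 1 (J:ℤ) with hK
  set M : Finset ℤ := Finset.Icc (⌊c⌋ + 1 - (J:ℤ)) (⌊d⌋ - 1) with hM
  set T : ℤ → ℂ := fun j => ∑ n ∈ I, w (n + j) * (starRingEnd ℂ) (w n) with hT
  set S : ℂ := ∑ n ∈ I, z n with hS
  have hmem : ∀ n : ℤ, n ∈ I ↔ (n:ℝ) ∈ Set.Ioc c d := by
    intro n
    simp only [hI, Finset.mem_Ioc, Set.mem_Ioc, Int.floor_lt, Int.le_floor]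
  -- Lemma A : column sums
  have hA : ∀ k ∈ K, ∑ m ∈ M, w (m + k) = S := by
    intro k hk
    rw [hK, Finset.mem_Icc] at hk
    have hinj : ∀ a ∈ M, ∀ b ∈ M, a + k = b + k → a = b := fun a _ b _ h => by omega
    have himg : ∑ n ∈ M.image (· + k), w n = ∑ m ∈ M, w (m + k) :=
      Finset.sum_image hinj
    have hsub' : I ⊆ M.image (· + k) := by
      intro n hn
      rw [hI, Finset.mem_Ioc] at hn
      refine Finset.mem_image.2 ⟨n - k, ?_, by ring⟩
      rw [hM, Finset.mem_Icc]; omega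
    rw [← himg, ← Finset.sum_subset hsub' (fun x _ hx => by
      simp only [hw]; rw [if_neg hx])]
    exact Finset.sum_congr rfl fun n hn => by simp only [hw]; rw [if_pos hn]
  -- Lemma B : shifted correlation sums
  have hB : ∀ k ∈ K, ∀ l ∈ K,
      ∑ m ∈ M, w (m + k) * (starRingEnd ℂ) (w (m + l)) = T (k - l) := by
    intro k hk l hl
    rw [hK, Finset.mem_Icc] at hk hl
    have hinj : ∀ a ∈ M, ∀ b ∈ M, a + l = b + l → a = b := fun a _ b _ h => by omega
    have himg : ∑ n ∈ M.image (· + l), w (n + (k - l)) * (starRingEnd ℂ) (w n)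
        = ∑ m ∈ M, w (m + k) * (starRingEnd ℂ) (w (m + l)) := by
      rw [Finset.sum_image hinj]
      exact Finset.sum_congr rfl fun m _ => by
        rw [show m + l + (k - l) = m + k from by ring]
    have hsub' : I ⊆ M.image (· + l) := by
      intro n hn
      rw [hI, Finset.mem_Ioc] at hn
      refine Finset.mem_image.2 ⟨n - l, ?_, by ring⟩
      rw [hM, Finset.mem_Icc]; omega
    rw [← himg, ← Finset.sum_subset hsub' (fun x _ hx => by
      simp only [hw]; rw [if_neg hx]; simp)]
  have hcardK : K.card = J := by
    rw [hK, Int.card_Icc]; omega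
  -- J * S as a double sum
  have hA' : ∑ m ∈ M, ∑ k ∈ K, w (m + k) = (J:ℂ) * S := by
    rw [Finset.sum_comm, Finset.sum_congr rfl hA, Finset.sum_const, hcardK,
      nsmul_eq_mul]
  set S2 : ℂ := ∑ m ∈ M, ∑ p ∈ K ×ˢ K, w (m + p.1) * (starRingEnd ℂ) (w (m + p.2))
    with hS2
  -- norm expansion
  have hnorm : ∀ m : ℤ, ‖∑ k ∈ K, w (m + k)‖ ^ 2
      = (∑ p ∈ K ×ˢ K, w (m + p.1) * (starRingEnd ℂ) (w (m + p.2))).re := by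
    intro m
    have hexp : (∑ k ∈ K, w (m + k)) * (starRingEnd ℂ) (∑ l ∈ K, w (m + l))
        = ∑ p ∈ K ×ˢ K, w (m + p.1) * (starRingEnd ℂ) (w (m + p.2)) := by
      rw [map_sum, Finset.sum_mul_sum,
        Finset.sum_product' K K (fun a b => w (m + a) * (starRingEnd ℂ) (w (m + b)))]
    rw [← hexp, Complex.mul_conj, Complex.ofReal_re, Complex.normSq_eq_norm_sq]
  have hS2re : S2.re = ∑ m ∈ M, ‖∑ k ∈ K, w (m + k)‖ ^ 2 := by
    rw [hS2, Complex.re_sum]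
    exact Finset.sum_congr rfl fun m _ => (hnorm m).symm
  have hS2nonneg : 0 ≤ S2.re := by
    rw [hS2re]; positivity
  -- Cauchy-Schwarz
  have hCS : (J:ℝ)^2 * ‖S‖^2 ≤ (M.card : ℝ) * S2.re := by
    have h1 : ‖(J:ℂ) * S‖ ≤ ∑ m ∈ M, ‖∑ k ∈ K, w (m + k)‖ := by
      rw [← hA']; exact norm_sum_le _ _
    have h2 : (∑ m ∈ M, ‖∑ k ∈ K, w (m + k)‖)^2
        ≤ (M.card : ℝ) * ∑ m ∈ M, ‖∑ k ∈ K, w (m + k)‖^2 := sq_sum_le_card_mul_sum_sq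
    have h3 : ‖(J:ℂ) * S‖^2 = (J:ℝ)^2 * ‖S‖^2 := by
      rw [norm_mul, mul_pow, Complex.norm_natCast]
    calc (J:ℝ)^2 * ‖S‖^2 = ‖(J:ℂ) * S‖^2 := h3.symm
      _ ≤ (∑ m ∈ M, ‖∑ k ∈ K, w (m + k)‖)^2 := by
          exact pow_le_pow_left₀ (norm_nonneg _) h1 2
      _ ≤ (M.card : ℝ) * ∑ m ∈ M, ‖∑ k ∈ K, w (m + k)‖^2 := h2
      _ = (M.card : ℝ) * S2.re := by rw [hS2re]
  -- card bound
  have hcM : M.card = (⌊d⌋ - 1 + 1 - (⌊c⌋ + 1 - (J:ℤ))).toNat := by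
    rw [hM, Int.card_Icc]
  have hcardM : (M.card : ℝ) ≤ Y + J := by
    by_cases hcd : ⌊c⌋ < ⌊d⌋
    · have hcd' : c < d := by
        have h1 : c < (⌊c⌋:ℝ) + 1 := Int.lt_floor_add_one c
        have h2 : ((⌊c⌋:ℝ) + 1) ≤ (⌊d⌋:ℝ) := by exact_mod_cast hcd
        have h3 : (⌊d⌋:ℝ) ≤ d := Int.floor_le d
        linarith
      have hYc : Y ≤ c := by
        by_contra h
        push_neg at h
        have hx : min Y d ∈ Set.Ioc c d := ⟨lt_min h hcd', min_le_right _ _⟩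
        have h1 := (hsub hx).1
        have h2 : min Y d ≤ Y := min_le_left _ _
        linarith
      have hd2 : d ≤ 2*Y := (hsub ⟨hcd', le_refl d⟩).2
      have h0 : (0:ℤ) ≤ ⌊d⌋ - 1 + 1 - (⌊c⌋ + 1 - (J:ℤ)) := by omega
      rw [hcM]
      have hcast : (((⌊d⌋ - 1 + 1 - (⌊c⌋ + 1 - (J:ℤ))).toNat : ℝ))
          = (⌊d⌋:ℝ) - (⌊c⌋:ℝ) - 1 + J := by
        rw [← Int.cast_natCast, Int.toNat_of_nonneg h0]
        push_cast; ring
      rw [hcast]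
      have h4 : (⌊d⌋:ℝ) ≤ d := Int.floor_le d
      have h5 : c - 1 < (⌊c⌋:ℝ) := Int.sub_one_lt_floor c
      linarith
    · rw [hcM]
      have h6 : (⌊d⌋ - 1 + 1 - (⌊c⌋ + 1 - (J:ℤ))).toNat ≤ J := by omega
      have h7 : (((⌊d⌋ - 1 + 1 - (⌊c⌋ + 1 - (J:ℤ))).toNat : ℝ)) ≤ (J:ℝ) := by
        exact_mod_cast h6
      linarith
  -- fiber cardinality
  have hfib : ∀ j ∈ Finset.Icc (-(J:ℤ)) (J:ℤ),
      ((K ×ˢ K).filter (fun p => p.1 - p.2 = j)).card = ((J:ℤ) - |j|).toNat := by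
    intro j hj
    rw [Finset.mem_Icc] at hj
    have himg : (K ×ˢ K).filter (fun p => p.1 - p.2 = j)
        = (Finset.Icc (max 1 (1+j)) (min (J:ℤ) ((J:ℤ)+j))).image (fun k => (k, k - j)) := by
      ext ⟨p1, p2⟩
      simp only [Finset.mem_filter, Finset.mem_product, Finset.mem_image,
        Finset.mem_Icc, hK, Prod.mk.injEq]
      constructor
      · rintro ⟨⟨⟨h1, h2⟩, h3, h4⟩, h5⟩
        exact ⟨p1, ⟨by omega, by omega⟩, rfl, by omega⟩
      · rintro ⟨k, ⟨hk1, hk2⟩, rfl, rfl⟩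
        refine ⟨⟨⟨by omega, by omega⟩, by omega, by omega⟩, by ring⟩
    rw [himg, Finset.card_image_of_injective _
      (fun a b h => by simpa using congrArg Prod.fst h), Int.card_Icc]
    rcases abs_cases j with ⟨h1, _⟩ | ⟨h1, _⟩ <;> rw [h1] <;> omega
  -- S2 fiber decomposition
  have hS2' : S2 = ∑ j ∈ Finset.Icc (-(J:ℤ)) (J:ℤ), (((J:ℤ) - |j|).toNat : ℂ) * T j := by
    rw [hS2, Finset.sum_comm]
    have hstep : ∑ p ∈ K ×ˢ K, ∑ m ∈ M, w (m + p.1) * (starRingEnd ℂ) (w (m + p.2))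
        = ∑ p ∈ K ×ˢ K, T (p.1 - p.2) := by
      refine Finset.sum_congr rfl fun p hp => ?_
      rw [Finset.mem_product] at hp
      exact hB p.1 hp.1 p.2 hp.2
    rw [hstep]
    have hmaps : ∀ p ∈ K ×ˢ K, p.1 - p.2 ∈ Finset.Icc (-(J:ℤ)) (J:ℤ) := by
      intro p hp
      rw [Finset.mem_product, hK, Finset.mem_Icc, Finset.mem_Icc] at hp
      rw [Finset.mem_Icc]; omega
    rw [← Finset.sum_fiberwise_of_maps_to' hmaps T]
    refine Finset.sum_congr rfl fun j hj => ?_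
    rw [Finset.sum_const, hfib j hj, nsmul_eq_mul]
  -- the inner sums of the goal equal T j
  have hinner : ∀ j : ℤ,
      ∑ n ∈ I.filter (fun n => ((n + j : ℤ) : ℝ) ∈ Set.Ioc c d),
        z (n + j) * (starRingEnd ℂ) (z n) = T j := by
    intro j
    simp only [hT]
    rw [Finset.sum_filter]
    refine Finset.sum_congr rfl fun n hn => ?_
    have h1 : w n = z n := by simp only [hw]; rw [if_pos hn]
    by_cases hcase : (n + j) ∈ I
    · have h2 : ((n + j : ℤ):ℝ) ∈ Set.Ioc c d := (hmem (n+j)).1 hcase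
      rw [if_pos h2, h1]
      have h3 : w (n + j) = z (n + j) := by simp only [hw]; rw [if_pos hcase]
      rw [h3]
    · have h2 : ¬ (((n + j : ℤ):ℝ) ∈ Set.Ioc c d) := fun h => hcase ((hmem (n+j)).2 h)
      rw [if_neg h2]
      have h3 : w (n + j) = 0 := by simp only [hw]; rw [if_neg hcase]
      rw [h3, zero_mul]
  -- rewrite goal RHS
  set R : ℂ := ∑ j ∈ Finset.Icc (-(J:ℤ)) (J:ℤ),
    ((1 - |(j : ℝ)| / (J : ℝ) : ℝ) : ℂ) * T j with hR
  have hgoalR : (∑ j ∈ Finset.Icc (-(J : ℤ)) (J : ℤ),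
      ((1 - |(j : ℝ)| / (J : ℝ) : ℝ) : ℂ) *
        ∑ n ∈ I.filter (fun n => ((n + j : ℤ) : ℝ) ∈ Set.Ioc c d),
          z (n + j) * (starRingEnd ℂ) (z n)) = R := by
    rw [hR]
    exact Finset.sum_congr rfl fun j _ => by rw [hinner j]
  rw [hgoalR]
  -- J * R = S2
  have hJR : (J:ℂ) * R = S2 := by
    rw [hR, hS2', Finset.mul_sum]
    refine Finset.sum_congr rfl fun j hj => ?_
    rw [Finset.mem_Icc] at hj
    rw [← mul_assoc]
    congr 1
    have habs : |(j:ℝ)| = ((|j| : ℤ) : ℝ) := by push_cast; rfl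
    have h0 : (0:ℤ) ≤ (J:ℤ) - |j| := by
      rcases abs_cases j with ⟨h1, _⟩ | ⟨h1, _⟩ <;> omega
    have hcast : ((((J:ℤ) - |j|).toNat : ℝ)) = (J:ℝ) - |(j:ℝ)| := by
      rw [habs, ← Int.cast_natCast, Int.toNat_of_nonneg h0]
      push_cast; ring
    have hre : (J:ℝ) * (1 - |(j:ℝ)| / (J:ℝ)) = ((((J:ℤ) - |j|).toNat : ℝ)) := by
      rw [hcast]; field_simp
    calc (J:ℂ) * ((1 - |(j : ℝ)| / (J : ℝ) : ℝ) : ℂ)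
        = (((J:ℝ) * (1 - |(j:ℝ)| / (J:ℝ)) : ℝ) : ℂ) := by push_cast; ring
      _ = (((J:ℤ) - |j|).toNat : ℂ) := by rw [hre]; push_cast; ring
  have hJRre : (J:ℝ) * R.re = S2.re := by
    have : ((J:ℂ) * R).re = (J:ℝ) * R.re := by
      simp [Complex.mul_re]
    rw [← this, hJR]
  -- final arithmetic
  have hkey : (J:ℝ)^2 * ‖S‖^2 ≤ (Y + J) * S2.re := by
    calc (J:ℝ)^2 * ‖S‖^2 ≤ (M.card : ℝ) * S2.re := hCS
      _ ≤ (Y + J) * S2.re := by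
          exact mul_le_mul_of_nonneg_right hcardM hS2nonneg
  have heq : (1 + Y / (J:ℝ)) * R.re = ((Y + J) * ((J:ℝ) * R.re)) / (J:ℝ)^2 := by
    field_simp
    ring
  rw [heq, hJRre, le_div_iff₀ (by positivity)]
  linarith [hkey]
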